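/- Let f : [a, b] → ℝ be continuous on [a, b] and specularly differentiable on (a, b). If f^♮(x) = 0 for all x ∈ (a, b), then f is constant on [a, b]. -/

import Mathlib

open Set Filter Topology

noncomputable def A (α β : ℝ) : ℝ :=
  (α * β - 1 + Real.sqrt ((α ^ 2 + 1) * (β ^ 2 + 1))) / (α + β)

/-- `f` is specularly differentiable at `x`: both one-sided derivatives exist. -/
def SpecularDifferentiableAt (f : ℝ → ℝ) (x : ℝ) : Prop :=
  DifferentiableWithinAt ℝ f (Ici x) x ∧ DifferentiableWithinAt ℝ f (Iic x) x

/-- The specular derivative of `f` at `x`, in terms of the right-hand derivative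
`α = f'₊(x)` and the left-hand derivative `β = f'₋(x)`. -/
noncomputable def specDeriv (f : ℝ → ℝ) (x : ℝ) : ℝ :=
  let α := derivWithin f (Ici x) x
  let β := derivWithin f (Iic x) x
  if α + β = 0 then 0 else A α β

lemma sum_eq_zero_of_A {α β : ℝ} (h : α + β ≠ 0) : A α β ≠ 0 := by
  unfold A
  rw [div_ne_zero_iff]
  refine ⟨?_, h⟩
  intro hnum
  have hs : Real.sqrt ((α ^ 2 + 1) * (β ^ 2 + 1)) = 1 - α * β := by linarith
  have hnn : (0:ℝ) ≤ (α ^ 2 + 1) * (β ^ 2 + 1) := by positivity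
  have := Real.sq_sqrt hnn
  rw [hs] at this
  have : (α + β)^2 = 0 := by nlinarith
  exact h (by nlinarith [sq_nonneg (α+β)])

lemma key (f : ℝ → ℝ) (a b : ℝ)
    (hcont : ContinuousOn f (Icc a b))
    (hdiff : ∀ x ∈ Ioo a b, DifferentiableWithinAt ℝ f (Ici x) x ∧ DifferentiableWithinAt ℝ f (Iic x) x)
    (hsum : ∀ x ∈ Ioo a b, derivWithin f (Ici x) x + derivWithin f (Iic x) x = 0) :
    ∀ x ∈ Ioo a b, ∀ y, x < y → y ≤ b → f y ≤ f x := by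
  intro x hx y hxy hyb
  have hax : a < x := hx.1
  have hyIcc : Icc x y ⊆ Icc a b := Icc_subset_Icc hax.le hyb
  -- main estimate with slack
  have main : ∀ ε > (0:ℝ), ∀ δ > (0:ℝ), f y ≤ f x + ε * (y - x) + δ := by
    intro ε hε δ hδ
    set g : ℝ → ℝ := fun t => f t - (f x + ε * (t - x)) with hg
    have hgcont : ContinuousOn g (Icc a b) := by
      apply hcont.sub
      exact (continuous_const.add (continuous_const.mul (continuous_id.sub continuous_const))).continuousOn
    have hgx : g x = 0 := by simp [hg]
    set T : Set ℝ := {t | t ∈ Icc x y ∧ ∀ s ∈ Icc x t, g s ≤ δ} with hT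
    have hxT : x ∈ T := by
      refine ⟨⟨le_rfl, hxy.le⟩, fun s hs => ?_⟩
      have : s = x := le_antisymm hs.2 hs.1
      rw [this, hgx]; exact hδ.le
    have hbdd : BddAbove T := ⟨y, fun t ht => ht.1.2⟩
    set c : ℝ := sSup T with hc
    have hxc : x ≤ c := le_csSup hbdd hxT
    have hcy : c ≤ y := csSup_le ⟨x, hxT⟩ (fun t ht => ht.1.2)
    have hbelow : ∀ s ∈ Ico x c, g s ≤ δ := by
      intro s hs
      obtain ⟨t, htT, hst⟩ := exists_lt_of_lt_csSup ⟨x, hxT⟩ hs.2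
      exact htT.2 s ⟨hs.1, hst.le⟩
    -- c > x
    have hxltc : x < c := by
      have hcx_at : ContinuousAt g x :=
        hgcont.continuousAt (Icc_mem_nhds hax hx.2)
      have : ∀ᶠ s in 𝓝 x, g s < δ := by
        have := hcx_at.eventually_lt_const (by rw [hgx]; exact hδ)
        exact this
      rw [Metric.eventually_nhds_iff] at this
      obtain ⟨r, hr, hball⟩ := this
      have ht : min y (x + r/2) ∈ T := by
        constructor
        · exact ⟨le_min hxy.le (by linarith), min_le_left _ _⟩
        · intro s hs
          have hsx : s - x ≤ r/2 := by
            have := hs.2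
            have : s ≤ x + r/2 := le_trans this (min_le_right _ _)
            linarith
          have : dist s x < r := by
            rw [Real.dist_eq, abs_of_nonneg (by linarith [hs.1])]; linarith
          exact (hball this).le
      calc x < min y (x + r/2) := lt_min hxy (by linarith)
        _ ≤ c := le_csSup hbdd ht
    have hgcle : g c ≤ δ := by
      have hcIcc : c ∈ Icc a b := ⟨by linarith, by linarith⟩
      have hwc : ContinuousWithinAt g (Icc a b) c := hgcont c hcIcc
      have hmono : Tendsto g (𝓝[Ico x c] c) (𝓝 (g c)) :=
        hwc.tendsto.mono_left (nhdsWithin_mono _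
          (fun u hu => ⟨by linarith [hu.1], by linarith [hu.2]⟩))
      have hne : (𝓝[Ico x c] c).NeBot := by
        rw [← mem_closure_iff_nhdsWithin_neBot, closure_Ico (ne_of_lt hxltc)]
        exact ⟨hxc, le_rfl⟩
      exact le_of_tendsto hmono (eventually_nhdsWithin_of_forall hbelow)
    have hcT : c ∈ T := by
      refine ⟨⟨hxc, hcy⟩, fun s hs => ?_⟩
      rcases lt_or_eq_of_le hs.2 with h | h
      · exact hbelow s ⟨hs.1, h⟩
      · rw [h]; exact hgcle
    -- suppose c < y : contradiction
    have hcy_eq : c = y := by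
      by_contra hne
      have hclty : c < y := lt_of_le_of_ne hcy hne
      have hcIoo : c ∈ Ioo a b := ⟨lt_trans hax hxltc, lt_of_lt_of_le hclty hyb⟩
      have hcat : ContinuousAt g c :=
        hgcont.continuousAt (Icc_mem_nhds hcIoo.1 hcIoo.2)
      -- g c = δ
      have hgc : g c = δ := by
        by_contra hne'
        have hlt : g c < δ := lt_of_le_of_ne hgcle hne'
        have := hcat.eventually_lt_const hlt
        rw [Metric.eventually_nhds_iff] at this
        obtain ⟨r, hr, hball⟩ := this
        have ht : min y (c + r/2) ∈ T := by
          constructor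
          · exact ⟨le_min (hxc.trans hcy) (by linarith), min_le_left _ _⟩
          · intro s hs
            rcases le_or_gt s c with h | h
            · exact hcT.2 s ⟨hs.1, h⟩
            · have : s ≤ c + r/2 := le_trans hs.2 (min_le_right _ _)
              have : dist s c < r := by
                rw [Real.dist_eq, abs_of_pos (by linarith)]; linarith
              exact (hball this).le
        have : min y (c + r/2) ≤ c := le_csSup hbdd ht
        have : c < min y (c + r/2) := lt_min hclty (by linarith)
        linarith
      -- maximality: points just above c violate the bound
      have hmax : ∀ t, c < t → t ≤ y → ∃ s ∈ Ioc c t, δ < g s := by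
        intro t hct hty
        by_contra hcon
        push_neg at hcon
        have htT : t ∈ T := by
          refine ⟨⟨by linarith, hty⟩, fun s hs => ?_⟩
          rcases le_or_gt s c with h | h
          · exact hcT.2 s ⟨hs.1, h⟩
          · exact hcon s ⟨h, hs.2⟩
        have := le_csSup hbdd htT
        linarith
      -- one-sided derivatives at c
      obtain ⟨hdr, hdl⟩ := hdiff c hcIoo
      have hsl : Tendsto (slope f c) (𝓝[<] c) (𝓝 (derivWithin f (Iic c) c)) := by
        have := hasDerivWithinAt_iff_tendsto_slope.1 hdl.hasDerivWithinAt
        rwa [Iic_diff_right] at this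
      have hsr : Tendsto (slope f c) (𝓝[>] c) (𝓝 (derivWithin f (Ici c) c)) := by
        have := hasDerivWithinAt_iff_tendsto_slope.1 hdr.hasDerivWithinAt
        rwa [Ici_sdiff_left] at this
      -- left derivative ≥ ε
      have hleft : ε ≤ derivWithin f (Iic c) c := by
        refine ge_of_tendsto hsl ?_
        have hmem : Ico x c ∈ 𝓝[<] c := by
          apply Ico_mem_nhdsLT_of_mem
          exact ⟨hxltc, le_rfl⟩
        filter_upwards [hmem] with t ht
        have hgt' : f t - (f x + ε * (t - x)) ≤ δ := hbelow t ht
        have hgc' : f c - (f x + ε * (c - x)) = δ := hgc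
        rw [slope_def_field, le_div_iff_of_neg (by linarith [ht.2] : t - c < 0)]
        linarith
      -- right derivative ≥ ε (frequently)
      have hfreq : ∃ᶠ s in 𝓝[>] c, ε ≤ slope f c s := by
        rw [frequently_iff]
        intro U hU
        rw [mem_nhdsGT_iff_exists_Ioc_subset] at hU
        obtain ⟨u, hu, hsub⟩ := hU
        have hu' : c < u := hu
        obtain ⟨s, hs, hgs⟩ := hmax (min y u) (lt_min hclty hu') (min_le_left _ _)
        refine ⟨s, hsub ⟨hs.1, le_trans hs.2 (min_le_right _ _)⟩, ?_⟩
        have hsc : c < s := hs.1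
        have hgc' : f c - (f x + ε * (c - x)) = δ := hgc
        have hgs' : δ < f s - (f x + ε * (s - x)) := hgs
        rw [slope_def_field, le_div_iff₀ (by linarith : (0:ℝ) < s - c)]
        linarith
      have hright : ε ≤ derivWithin f (Ici c) c := by
        have hne : (𝓝[>] c ⊓ 𝓟 {s : ℝ | ε ≤ slope f c s}).NeBot :=
          Filter.frequently_iff_neBot.mp hfreq
        exact ge_of_tendsto (x := 𝓝[>] c ⊓ 𝓟 {s : ℝ | ε ≤ slope f c s})
          (hsr.mono_left inf_le_left)
          (eventually_inf_principal.2 (Eventually.of_forall (fun s hs => hs)))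
      have := hsum c hcIoo
      linarith
    have := hcT.2 y (hcy_eq ▸ ⟨hxc, le_rfl⟩)
    simp only [hg] at this
    linarith
  -- pass to the limit
  have h2 : ∀ ε > (0:ℝ), f y ≤ f x + ε := by
    intro ε hε
    have hpos : (0:ℝ) < (y - x) + 1 := by linarith
    have := main (ε / ((y-x)+1)) (by positivity) (ε / ((y-x)+1)) (by positivity)
    have hle : ε / ((y-x)+1) * (y - x) + ε / ((y-x)+1) = ε := by
      field_simp
    linarith
  linarith [le_of_forall_pos_le_add h2]

theorem constant_of_specDeriv_zero (f : ℝ → ℝ) (a b : ℝ) (hab : a < b)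
    (hcont : ContinuousOn f (Icc a b))
    (hdiff : ∀ x ∈ Ioo a b, SpecularDifferentiableAt f x)
    (hzero : ∀ x ∈ Ioo a b, specDeriv f x = 0) :
    ∀ x ∈ Icc a b, ∀ y ∈ Icc a b, f x = f y := by
  have hsum : ∀ x ∈ Ioo a b, derivWithin f (Ici x) x + derivWithin f (Iic x) x = 0 := by
    intro x hx
    have h := hzero x hx
    unfold specDeriv at h
    by_contra hne
    simp only [if_neg hne] at h
    exact sum_eq_zero_of_A hne h
  have hkey1 := key f a b hcont hdiff hsum
  have hnegdiff : ∀ x ∈ Ioo a b, DifferentiableWithinAt ℝ (fun t => -f t) (Ici x) x ∧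
      DifferentiableWithinAt ℝ (fun t => -f t) (Iic x) x :=
    fun x hx => ⟨(hdiff x hx).1.neg, (hdiff x hx).2.neg⟩
  have hnegsum : ∀ x ∈ Ioo a b, derivWithin (fun t => -f t) (Ici x) x +
      derivWithin (fun t => -f t) (Iic x) x = 0 := by
    intro x hx
    show derivWithin (-f) (Ici x) x + derivWithin (-f) (Iic x) x = 0
    rw [derivWithin.neg, derivWithin.neg]
    linarith [hsum x hx]
  have hkey2 := key (fun t => -f t) a b hcont.neg hnegdiff hnegsum
  have heq : ∀ x ∈ Ioo a b, f x = f b := by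
    intro x hx
    have h1 := hkey1 x hx b hx.2 le_rfl
    have h2 := hkey2 x hx b hx.2 le_rfl
    simp only [neg_le_neg_iff] at h2
    linarith
  have heqa : f a = f b := by
    have hwc : ContinuousWithinAt f (Icc a b) a := hcont a ⟨le_rfl, hab.le⟩
    have h1 : Tendsto f (𝓝[Ioo a b] a) (𝓝 (f a)) :=
      hwc.tendsto.mono_left (nhdsWithin_mono _ Ioo_subset_Icc_self)
    have h2 : Tendsto f (𝓝[Ioo a b] a) (𝓝 (f b)) := by
      apply Tendsto.congr' _ tendsto_const_nhds
      exact eventually_nhdsWithin_of_forall (fun s hs => (heq s hs).symm)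
    haveI : (𝓝[Ioo a b] a).NeBot := by
      rw [← mem_closure_iff_nhdsWithin_neBot, closure_Ioo hab.ne]
      exact ⟨le_rfl, hab.le⟩
    exact tendsto_nhds_unique h1 h2
  have hall : ∀ x ∈ Icc a b, f x = f b := by
    intro x hx
    rcases eq_or_lt_of_le hx.1 with h | h
    · rw [← h]; exact heqa
    rcases eq_or_lt_of_le hx.2 with h2 | h2
    · rw [h2]
    · exact heq x ⟨h, h2⟩
  intro x hx y hy
  rw [hall x hx, hall y hy]
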